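/- Let K_1, K_2 ⊂ ℝ be Cantor sets with τ(K_1)·τ(K_2) ≥ 1 and let ℓ be the length of the convex hull of K_2 (assuming the convex hulls of K_1, K_2 have a common length ℓ). For any x = (x_1, x_2) ∈ ℝ² with both coordinates nonzero, the pinned dot product set Π_x(K_1 × K_2) = { x·y : y ∈ K_1 × K_2 } contains an interval of length at least ℓ·min(|x_1|, |x_2|). -/

import Mathlib

open Set

/-- A Cantor set: a non-empty compact, perfect, totally disconnected subset of ℝ. -/
def IsCantorSet (K : Set ℝ) : Prop :=
  K.Nonempty ∧ IsCompact K ∧ Perfect K ∧ IsTotallyDisconnected K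

/-- `(a,b)` is a bounded gap of `K`: a bounded connected component of the complement. -/
def IsGap (K : Set ℝ) (a b : ℝ) : Prop :=
  a < b ∧ a ∈ K ∧ b ∈ K ∧ Set.Ioo a b ∩ K = ∅

/-- Left endpoints of gaps to the right of `u` of length at least `ℓ` (or the right extreme of `K`). -/
def rightTargets (K : Set ℝ) (u ℓ : ℝ) : Set ℝ :=
  {a | u < a ∧ ((∃ b, IsGap K a b ∧ ℓ ≤ b - a) ∨ a = sSup K)}

/-- Right endpoints of gaps to the left of `u` of length at least `ℓ` (or the left extreme of `K`). -/
def leftTargets (K : Set ℝ) (u ℓ : ℝ) : Set ℝ :=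
  {b | b < u ∧ ((∃ a, IsGap K a b ∧ ℓ ≤ b - a) ∨ b = sInf K)}

/-- The set of bridge/gap ratios of `K` at endpoints of bounded gaps. -/
def thicknessValues (K : Set ℝ) : Set ℝ :=
  {r | ∃ a b, IsGap K a b ∧
    (r = (sInf (rightTargets K b (b - a)) - b) / (b - a) ∨
     r = (a - sSup (leftTargets K a (b - a))) / (b - a))}

/-- Newhouse thickness of `K`. -/
noncomputable def thickness (K : Set ℝ) : ℝ := sInf (thicknessValues K)

def rightTargetsEps (K : Set ℝ) (ε u ℓ : ℝ) : Set ℝ :=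
  {a | u < a ∧ ((∃ b, IsGap K a b ∧ (1 - ε) * ℓ < b - a) ∨ a = sSup K)}

def leftTargetsEps (K : Set ℝ) (ε u ℓ : ℝ) : Set ℝ :=
  {b | b < u ∧ ((∃ a, IsGap K a b ∧ (1 - ε) * ℓ < b - a) ∨ b = sInf K)}

def epsThicknessValues (K : Set ℝ) (ε : ℝ) : Set ℝ :=
  {r | ∃ a b, IsGap K a b ∧
    (r = (sInf (rightTargetsEps K ε b (b - a)) - b) / (b - a) ∨
     r = (a - sSup (leftTargetsEps K ε a (b - a))) / (b - a))}

/-- The `ε`-thickness of `K`. -/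
noncomputable def epsThickness (K : Set ℝ) (ε : ℝ) : ℝ := sInf (epsThicknessValues K ε)

/-- Two bounded subsets of ℝ are linked if the interiors of their convex hulls intersect
but neither is contained in the other. -/
def Linked (K1 K2 : Set ℝ) : Prop :=
  (Set.Ioo (sInf K1) (sSup K1) ∩ Set.Ioo (sInf K2) (sSup K2)).Nonempty ∧
  ¬ Set.Ioo (sInf K1) (sSup K1) ⊆ Set.Ioo (sInf K2) (sSup K2) ∧
  ¬ Set.Ioo (sInf K2) (sSup K2) ⊆ Set.Ioo (sInf K1) (sSup K1)

/-- The standard middle-thirds Cantor set. -/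
noncomputable def cantorThirds : Set ℝ :=
  ⋂ n : ℕ,
    (fun S : Set ℝ => (fun x : ℝ => x / 3) '' S ∪ (fun x : ℝ => x / 3 + 2/3) '' S)^[n]
      (Set.Icc 0 1)

/-- A section of the middle-thirds Cantor set: a scaled translated copy of it sitting inside it. -/
def IsCantorSection (S : Set ℝ) : Prop :=
  ∃ (n : ℕ) (a : ℝ), S = (fun x : ℝ => a + x / 3 ^ n) '' cantorThirds ∧ S ⊆ cantorThirds

/-- The open wedge at `x`. -/
def Wedge (x : ℝ × ℝ) : Set (ℝ × ℝ) :=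
  {y | y.2 - x.2 < y.1 - x.1 ∧ y.1 - x.1 < 3 * (y.2 - x.2)}


variable {K : Set ℝ}

lemma IsCantorSet.nonempty (h : IsCantorSet K) : K.Nonempty := h.1
lemma IsCantorSet.compact (h : IsCantorSet K) : IsCompact K := h.2.1
lemma IsCantorSet.perfect' (h : IsCantorSet K) : Perfect K := h.2.2.1
lemma IsCantorSet.bddBelow (h : IsCantorSet K) : BddBelow K := h.compact.bddBelow
lemma IsCantorSet.bddAbove (h : IsCantorSet K) : BddAbove K := h.compact.bddAbove
lemma IsCantorSet.sInf_mem (h : IsCantorSet K) : sInf K ∈ K := h.compact.sInf_mem h.1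
lemma IsCantorSet.sSup_mem (h : IsCantorSet K) : sSup K ∈ K := h.compact.sSup_mem h.1

lemma IsCantorSet.acc (h : IsCantorSet K) {x : ℝ} (hx : x ∈ K) {U : Set ℝ} (hU : U ∈ nhds x) :
    ∃ y ∈ U ∩ K, y ≠ x := accPt_iff_nhds.1 (h.perfect'.acc x hx) U hU

lemma IsCantorSet.sInf_lt_sSup (h : IsCantorSet K) : sInf K < sSup K := by
  obtain ⟨x, hx⟩ := h.nonempty
  obtain ⟨y, ⟨_, hyK⟩, hyx⟩ := h.acc hx (Filter.univ_mem)
  rcases lt_or_gt_of_ne hyx with hlt | hgt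
  · exact lt_of_le_of_lt (csInf_le h.bddBelow hyK) (lt_of_lt_of_le hlt (le_csSup h.bddAbove hx))
  · exact lt_of_le_of_lt (csInf_le h.bddBelow hx) (lt_of_lt_of_le hgt (le_csSup h.bddAbove hyK))

lemma IsGap.notMem (hg : IsGap K a b) {y : ℝ} (h1 : a < y) (h2 : y < b) : y ∉ K := by
  intro hy
  have : y ∈ Set.Ioo a b ∩ K := ⟨⟨h1, h2⟩, hy⟩
  rw [hg.2.2.2] at this; exact this

lemma gap_left_interior (h : IsCantorSet K) {a b : ℝ} (hg : IsGap K a b) : sInf K < a := by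
  obtain ⟨y, ⟨hyU, hyK⟩, hyne⟩ := h.acc hg.2.1 (Iio_mem_nhds hg.1 : Iio b ∈ nhds a)
  have hya : y < a := by
    rcases lt_or_gt_of_ne hyne with h' | h'
    · exact h'
    · exact absurd hyK (hg.notMem h' hyU)
  exact lt_of_le_of_lt (csInf_le h.bddBelow hyK) hya

lemma gap_right_interior (h : IsCantorSet K) {a b : ℝ} (hg : IsGap K a b) : b < sSup K := by
  obtain ⟨y, ⟨hyU, hyK⟩, hyne⟩ := h.acc hg.2.2.1 (Ioi_mem_nhds hg.1 : Ioi a ∈ nhds b)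
  have hby : b < y := by
    rcases lt_or_gt_of_ne hyne with h' | h'
    · exact absurd hyK (hg.notMem hyU h')
    · exact h'
  exact lt_of_lt_of_le hby (le_csSup h.bddAbove hyK)

lemma gap_exists (h : IsCantorSet K) {x : ℝ} (hx : x ∉ K) (h1 : sInf K < x) (h2 : x < sSup K) :
    ∃ a b, IsGap K a b ∧ a < x ∧ x < b := by
  set L := K ∩ Iic x with hL
  set R := K ∩ Ici x with hR
  have hLne : L.Nonempty := ⟨sInf K, h.sInf_mem, le_of_lt h1⟩
  have hRne : R.Nonempty := ⟨sSup K, h.sSup_mem, le_of_lt h2⟩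
  have hLc : IsCompact L := h.compact.inter_right isClosed_Iic
  have hRc : IsCompact R := h.compact.inter_right isClosed_Ici
  set a := sSup L with ha
  set b := sInf R with hb
  have haL : a ∈ L := hLc.sSup_mem hLne
  have hbR : b ∈ R := hRc.sInf_mem hRne
  have hax : a < x := lt_of_le_of_ne haL.2 (fun h' => hx (h' ▸ haL.1))
  have hxb : x < b := lt_of_le_of_ne hbR.2 (fun h' => hx (h' ▸ hbR.1))
  refine ⟨a, b, ⟨lt_trans hax hxb, haL.1, hbR.1, ?_⟩, hax, hxb⟩
  ext y
  simp only [Set.mem_inter_iff, Set.mem_Ioo, Set.mem_empty_iff_false, iff_false]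
  rintro ⟨⟨hay, hyb⟩, hyK⟩
  rcases le_or_gt y x with hyx | hxy
  · exact absurd (le_csSup hLc.bddAbove (⟨hyK, hyx⟩ : y ∈ L)) (not_le.2 hay)
  · exact absurd (csInf_le hRc.bddBelow (⟨hyK, le_of_lt hxy⟩ : y ∈ R)) (not_le.2 hyb)


-- layer 2: appended to base
section L2
variable {K : Set ℝ}

/-- two gaps: if a < a' then b ≤ a' -/
lemma gap_order {a b a' b' : ℝ} (hg : IsGap K a b) (hg' : IsGap K a' b') (h : a < a') : b ≤ a' := by
  by_contra h'
  push_neg at h'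
  exact hg.notMem h h' hg'.2.1

lemma gap_right_unique {a b b' : ℝ} (hg : IsGap K a b) (hg' : IsGap K a b') : b = b' := by
  rcases lt_trichotomy b b' with h | h | h
  · exact absurd hg.2.2.1 (hg'.notMem hg.1 h)
  · exact h
  · exact absurd hg'.2.2.1 (hg.notMem hg'.1 h)

/-- no two adjacent gaps sharing endpoint (perfectness) -/
lemma gap_not_adjacent (h : IsCantorSet K) {a b b' : ℝ} (hg : IsGap K a b) (hg' : IsGap K b b') :
    False := by
  obtain ⟨y, ⟨hyU, hyK⟩, hyne⟩ := h.acc hg.2.2.1 (Ioo_mem_nhds hg.1 hg'.1 : Ioo a b' ∈ nhds b)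
  rcases lt_trichotomy y b with h' | h' | h'
  · exact hg.notMem hyU.1 h' hyK
  · exact hyne h'
  · exact hg'.notMem h' hyU.2 hyK

lemma rightTargets_mem_sSup (h : IsCantorSet K) {a b : ℝ} (hg : IsGap K a b) (ℓ : ℝ) :
    sSup K ∈ rightTargets K b ℓ := ⟨gap_right_interior h hg, Or.inr rfl⟩

lemma rightTargets_bddBelow (K : Set ℝ) (u ℓ : ℝ) : BddBelow (rightTargets K u ℓ) :=
  ⟨u, fun _ hx => le_of_lt hx.1⟩

lemma leftTargets_mem_sInf (h : IsCantorSet K) {a b : ℝ} (hg : IsGap K a b) (ℓ : ℝ) :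
    sInf K ∈ leftTargets K a ℓ := ⟨gap_left_interior h hg, Or.inr rfl⟩

lemma leftTargets_bddAbove (K : Set ℝ) (u ℓ : ℝ) : BddAbove (leftTargets K u ℓ) :=
  ⟨u, fun _ hx => le_of_lt hx.1⟩

lemma thicknessValues_nonneg (h : IsCantorSet K) : ∀ r ∈ thicknessValues K, 0 ≤ r := by
  rintro r ⟨a, b, hg, hr | hr⟩
  · have h1 : b ≤ sInf (rightTargets K b (b - a)) :=
      le_csInf ⟨_, rightTargets_mem_sSup h hg _⟩ (fun x hx => le_of_lt hx.1)
    rw [hr]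
    exact div_nonneg (by linarith) (by linarith [hg.1])
  · have h1 : sSup (leftTargets K a (b - a)) ≤ a :=
      csSup_le ⟨_, leftTargets_mem_sInf h hg _⟩ (fun x hx => le_of_lt hx.1)
    rw [hr]
    exact div_nonneg (by linarith) (by linarith [hg.1])

lemma thickness_nonneg (h : IsCantorSet K) : 0 ≤ thickness K := by
  rcases Set.eq_empty_or_nonempty (thicknessValues K) with he | hne
  · rw [thickness, he, Real.sInf_empty]
  · exact Real.sInf_nonneg (thicknessValues_nonneg h)

lemma thickness_le (h : IsCantorSet K) {r : ℝ} (hr : r ∈ thicknessValues K) : thickness K ≤ r :=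
  csInf_le ⟨0, thicknessValues_nonneg h⟩ hr

/-- the right bridge lemma -/
lemma bridge_right (h : IsCantorSet K) {a b d : ℝ} (hg : IsGap K a b) (hd : d ∉ K)
    (hbd : b < d) (hclose : d - b < thickness K * (b - a)) :
    ∃ a' b', IsGap K a' b' ∧ b < a' ∧ a' < d ∧ d < b' ∧ b' - a' < b - a := by
  set ℓ := b - a with hℓ
  have hℓpos : 0 < ℓ := by simp [hℓ]; linarith [hg.1]
  set B := sInf (rightTargets K b ℓ) with hB
  have hτ : thickness K ≤ (B - b) / ℓ := thickness_le h ⟨a, b, hg, Or.inl rfl⟩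
  have hBlow : thickness K * ℓ ≤ B - b := by
    rw [div_eq_mul_inv] at hτ
    calc thickness K * ℓ ≤ ((B - b) * ℓ⁻¹) * ℓ := by
          exact mul_le_mul_of_nonneg_right hτ (le_of_lt hℓpos)
      _ = B - b := by field_simp
  have hdB : d < B := by linarith
  have hdsup : d < sSup K := lt_of_lt_of_le hdB
    (csInf_le (rightTargets_bddBelow K b ℓ) (rightTargets_mem_sSup h hg ℓ))
  have hdinf : sInf K < d := lt_of_le_of_lt (csInf_le h.bddBelow hg.2.2.1) hbd
  obtain ⟨a', b', hg', ha'd, hdb'⟩ := gap_exists h hd hdinf hdsup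
  have hba' : b ≤ a' := by
    by_contra hc
    push_neg at hc
    -- a' < b; since b ∈ K and a' < b, and d > b means b ∈ (a', b') unless b ≤ a'
    exact hg'.notMem hc (lt_trans hbd hdb') hg.2.2.1
  have hba'' : b < a' := by
    rcases lt_or_eq_of_le hba' with h' | h'
    · exact h'
    · exact absurd (h' ▸ hg') (fun hgg => gap_not_adjacent h hg hgg)
  have hlen : b' - a' < ℓ := by
    by_contra hc
    push_neg at hc
    have : a' ∈ rightTargets K b ℓ := ⟨hba'', Or.inl ⟨b', hg', hc⟩⟩
    have := csInf_le (rightTargets_bddBelow K b ℓ) this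
    linarith
  exact ⟨a', b', hg', hba'', ha'd, hdb', hlen⟩

/-- the left bridge lemma -/
lemma bridge_left (h : IsCantorSet K) {c d p : ℝ} (hg : IsGap K c d) (hp : p ∉ K)
    (hpc : p < c) (hclose : c - p < thickness K * (d - c)) :
    ∃ c' d', IsGap K c' d' ∧ c' < p ∧ p < d' ∧ d' < c ∧ d' - c' < d - c := by
  set ℓ := d - c with hℓ
  have hℓpos : 0 < ℓ := by simp [hℓ]; linarith [hg.1]
  set B := sSup (leftTargets K c ℓ) with hB
  have hτ : thickness K ≤ (c - B) / ℓ := thickness_le h ⟨c, d, hg, Or.inr rfl⟩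
  have hBlow : thickness K * ℓ ≤ c - B := by
    rw [div_eq_mul_inv] at hτ
    calc thickness K * ℓ ≤ ((c - B) * ℓ⁻¹) * ℓ := by
          exact mul_le_mul_of_nonneg_right hτ (le_of_lt hℓpos)
      _ = c - B := by field_simp
  have hdB : B < p := by linarith
  have hpinf : sInf K < p := lt_of_le_of_lt
    (le_csSup (leftTargets_bddAbove K c ℓ) (leftTargets_mem_sInf h hg ℓ)) hdB
  have hpsup : p < sSup K := lt_of_lt_of_le hpc (le_csSup h.bddAbove hg.2.1)
  obtain ⟨c', d', hg', hc'p, hpd'⟩ := gap_exists h hp hpinf hpsup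
  have hd'c : d' ≤ c := by
    by_contra hcon
    push_neg at hcon
    exact hg'.notMem (lt_trans hc'p hpc) hcon hg.2.1
  have hd'c' : d' < c := by
    rcases lt_or_eq_of_le hd'c with h' | h'
    · exact h'
    · exact absurd (h' ▸ hg') (fun hgg => gap_not_adjacent h hgg hg)
  have hlen : d' - c' < ℓ := by
    by_contra hcon
    push_neg at hcon
    have hmem : d' ∈ leftTargets K c ℓ := ⟨hd'c', Or.inl ⟨c', hg', hcon⟩⟩
    have := le_csSup (leftTargets_bddAbove K c ℓ) hmem
    linarith
  exact ⟨c', d', hg', hc'p, hpd', hd'c', hlen⟩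

end L2

section L3
variable {K A B : Set ℝ}

/-- big gaps are finite in number -/
lemma bigGaps_finite (h : IsCantorSet K) {ε : ℝ} (hε : 0 < ε) :
    {p : ℝ × ℝ | IsGap K p.1 p.2 ∧ ε < p.2 - p.1}.Finite := by
  set S := {p : ℝ × ℝ | IsGap K p.1 p.2 ∧ ε < p.2 - p.1} with hS
  set Afst := Prod.fst '' S with hA
  have hsep : ∀ p ∈ Afst, ∀ q ∈ Afst, p ≠ q → ε ≤ |p - q| := by
    rintro p ⟨⟨p1, p2⟩, hp, rfl⟩ q ⟨⟨q1, q2⟩, hq, rfl⟩ hne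
    simp only at *
    rcases lt_or_gt_of_ne hne with hlt | hgt
    · have := gap_order hp.1 hq.1 hlt
      rw [abs_of_nonpos (by linarith)]
      linarith [hp.2]
    · have := gap_order hq.1 hp.1 hgt
      rw [abs_of_nonneg (by linarith)]
      linarith [hq.2]
  have hrange : ∀ p ∈ Afst, sInf K ≤ p ∧ p ≤ sSup K := by
    rintro p ⟨⟨p1, p2⟩, hp, rfl⟩
    exact ⟨csInf_le h.bddBelow hp.1.2.1, le_csSup h.bddAbove hp.1.2.1⟩
  have hAfin : Afst.Finite := by
    have hinj : Set.InjOn (fun x : ℝ => ⌊x / ε⌋) Afst := by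
      intro p hp q hq hpq
      by_contra hne
      have hsep' := hsep p hp q hq hne
      have hz : ⌊p / ε⌋ = ⌊q / ε⌋ := hpq
      have hz' : ((⌊p / ε⌋ : ℤ) : ℝ) = ((⌊q / ε⌋ : ℤ) : ℝ) := by exact_mod_cast hz
      have h1 : |p / ε - q / ε| < 1 := by
        have b1 := Int.sub_one_lt_floor (p / ε)
        have b2 := Int.floor_le (p / ε)
        have b3 := Int.sub_one_lt_floor (q / ε)
        have b4 := Int.floor_le (q / ε)
        rw [abs_lt]
        constructor <;> linarith
      have habs : |p - q| < ε := by
        rw [abs_lt] at h1 ⊢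
        have e1 : p / ε * ε = p := by field_simp
        have e2 : q / ε * ε = q := by field_simp
        constructor <;> nlinarith [h1.1, h1.2]
      linarith [hsep']
    have himg : (fun x : ℝ => ⌊x / ε⌋) '' Afst ⊆ Set.Icc ⌊sInf K / ε⌋ ⌊sSup K / ε⌋ := by
      rintro z ⟨p, hp, rfl⟩
      have := hrange p hp
      constructor
      · exact Int.floor_le_floor (by apply div_le_div_of_nonneg_right this.1 hε.le)
      · exact Int.floor_le_floor (by apply div_le_div_of_nonneg_right this.2 hε.le)
    exact Set.Finite.of_finite_image ((Set.finite_Icc _ _).subset himg) hinj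
  refine Set.Finite.of_finite_image (hAfin.subset (Set.image_subset_iff.2 (fun p hp => ⟨p, hp, rfl⟩))) ?_
  intro p hp q hq hpq
  have : p.2 = q.2 := gap_right_unique (hpq ▸ hp.1) hq.1
  exact Prod.ext hpq this

/-- a linked configuration: gap (a,b) of A on the left, gap (c,d) of B on the right -/
def Cfg (A B : Set ℝ) (a b c d : ℝ) : Prop :=
  IsGap A a b ∧ IsGap B c d ∧ a < c ∧ c < b ∧ b < d

noncomputable def gapCount (A : Set ℝ) (ε ℓ : ℝ) : ℕ :=
  {p : ℝ × ℝ | IsGap A p.1 p.2 ∧ ε < p.2 - p.1 ∧ p.2 - p.1 < ℓ}.ncard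

lemma gapCount_mono (h : IsCantorSet A) {ε : ℝ} (hε : 0 < ε) {ℓ ℓ' : ℝ} (hll : ℓ ≤ ℓ') :
    gapCount A ε ℓ ≤ gapCount A ε ℓ' := by
  apply Set.ncard_le_ncard
  · intro p hp; exact ⟨hp.1, hp.2.1, lt_of_lt_of_le hp.2.2 hll⟩
  · exact (bigGaps_finite h hε).subset (fun p hp => ⟨hp.1, hp.2.1⟩)

lemma gapCount_strict (h : IsCantorSet A) {ε : ℝ} (hε : 0 < ε) {ℓ ℓ' a b : ℝ}
    (hg : IsGap A a b) (hεl : ε < b - a) (h1 : ℓ' ≤ b - a) (h2 : b - a < ℓ) :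
    gapCount A ε ℓ' < gapCount A ε ℓ := by
  apply Set.ncard_lt_ncard
  · constructor
    · intro p hp; exact ⟨hp.1, hp.2.1, lt_of_lt_of_le hp.2.2 (le_trans h1 (le_of_lt h2))⟩
    · intro hsub
      have : (a, b) ∈ {p : ℝ × ℝ | IsGap A p.1 p.2 ∧ ε < p.2 - p.1 ∧ p.2 - p.1 < ℓ} :=
        ⟨hg, hεl, h2⟩
      have := hsub this
      simp only [Set.mem_setOf_eq] at this
      linarith [this.2.2]
  · exact (bigGaps_finite h hε).subset (fun p hp => ⟨hp.1, hp.2.1⟩)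

/-- the descent step -/
lemma descent_step (hA : IsCantorSet A) (hB : IsCantorSet B)
    (hτ : 1 ≤ thickness A * thickness B) (hdisj : ∀ x ∈ A, x ∉ B)
    {a b c d : ℝ} (hcfg : Cfg A B a b c d) :
    ∃ a' b' c' d', Cfg B A c' d' a' b' ∧ b' - a' ≤ b - a ∧ d' - c' ≤ d - c ∧
      (b' - a' < b - a ∨ d' - c' < d - c) := by
  obtain ⟨hgA, hgB, hac, hcb, hbd⟩ := hcfg
  have hlU : 0 < b - a := by linarith [hgA.1]
  have hlV : 0 < d - c := by linarith [hgB.1]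
  have hτA := thickness_nonneg hA
  have hτB := thickness_nonneg hB
  rcases le_or_gt (d - c) (thickness A * (b - a)) with hcase | hcase
  · -- move on A's side, to the right
    have hdA : d ∉ A := fun hdmem => hdisj d hdmem hgB.2.2.1
    have hclose : d - b < thickness A * (b - a) := by linarith
    obtain ⟨a', b', hg', h1, h2, h3, h4⟩ := bridge_right hA hgA hdA hbd hclose
    exact ⟨a', b', c, d, ⟨hgB, hg', lt_trans hcb h1, h2, h3⟩, le_of_lt h4, le_refl _,
      Or.inl h4⟩
  · -- then thickness B * (d-c) ≥ b - a
    have hcase2 : b - a ≤ thickness B * (d - c) := by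
      by_contra hcon
      push_neg at hcon
      nlinarith
    have haB : a ∉ B := fun hmem => hdisj a hgA.2.1 hmem
    have hclose : c - a < thickness B * (d - c) := by linarith
    obtain ⟨c', d', hg', h1, h2, h3, h4⟩ := bridge_left hB hgB haB hac hclose
    exact ⟨a, b, c', d', ⟨hg', hgA, h1, h2, lt_trans h3 hcb⟩, le_refl _, le_of_lt h4,
      Or.inr h4⟩

end L3

section L4
variable {K1 K2 : Set ℝ}

lemma sep_exists (h1 : IsCantorSet K1) (h2 : IsCantorSet K2) (hdisj : ∀ x ∈ K1, x ∉ K2) :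
    ∃ ε > 0, ∀ x ∈ K1, ∀ y ∈ K2, ε ≤ |x - y| := by
  have hprod : IsCompact (K1 ×ˢ K2) := h1.compact.prod h2.compact
  have hne : (K1 ×ˢ K2).Nonempty := h1.nonempty.prod h2.nonempty
  obtain ⟨p, hp, hmin⟩ := hprod.exists_isMinOn hne
    (f := fun q : ℝ × ℝ => |q.1 - q.2|) (by fun_prop)
  refine ⟨|p.1 - p.2|, ?_, ?_⟩
  · rcases eq_or_lt_of_le (abs_nonneg (p.1 - p.2)) with h | h
    · exfalso
      have : p.1 = p.2 := by
        have := abs_eq_zero.1 h.symm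
        linarith
      exact hdisj p.1 hp.1 (this ▸ hp.2)
    · exact h
  · intro x hx y hy
    exact hmin (Set.mk_mem_prod hx hy)

/-- configs have well-separated gap lengths and give close points -/
lemma cfg_sep {A B : Set ℝ} {ε a b c d : ℝ}
    (hsep : ∀ x ∈ A, ∀ y ∈ B, ε ≤ |x - y|) (hcfg : Cfg A B a b c d) :
    ε < b - a ∧ ε < d - c := by
  obtain ⟨hgA, hgB, hac, hcb, hbd⟩ := hcfg
  have := hsep b hgA.2.2.1 c hgB.2.1
  rw [abs_of_pos (by linarith)] at this
  constructor <;> linarith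

theorem gap_lemma (h1 : IsCantorSet K1) (h2 : IsCantorSet K2)
    (hτ : 1 ≤ thickness K1 * thickness K2) (hlink : Linked K1 K2) :
    (K1 ∩ K2).Nonempty := by
  by_contra hcon
  have hdisj : ∀ x ∈ K1, x ∉ K2 := by
    intro x hx hx2
    exact hcon ⟨x, hx, hx2⟩
  have hdisj' : ∀ x ∈ K2, x ∉ K1 := fun x hx hx1 => hdisj x hx1 hx
  obtain ⟨ε, hε, hsep⟩ := sep_exists h1 h2 hdisj
  have hsep' : ∀ x ∈ K2, ∀ y ∈ K1, ε ≤ |x - y| := by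
    intro x hx y hy
    rw [abs_sub_comm]
    exact hsep y hy x hx
  -- measure
  set m : Set ℝ → Set ℝ → ℝ → ℝ → ℝ → ℝ → ℕ :=
    fun A B a b c d => gapCount A ε (b - a) + gapCount B ε (d - c) with hm
  set P : ℕ → Prop := fun n =>
    (∃ a b c d, Cfg K1 K2 a b c d ∧ m K1 K2 a b c d = n) ∨
    (∃ a b c d, Cfg K2 K1 a b c d ∧ m K2 K1 a b c d = n) with hP
  -- initial configuration
  have hinit : ∃ n, P n := by
    -- extract interleaving of hulls
    obtain ⟨hlink1, hlink2, hlink3⟩ := hlink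
    obtain ⟨z, ⟨hz1, hz2⟩, ⟨hz3, hz4⟩⟩ := hlink1
    have hcases : (sInf K1 < sInf K2 ∧ sSup K1 < sSup K2) ∨
        (sInf K2 < sInf K1 ∧ sSup K2 < sSup K1) := by
      rcases lt_or_ge (sInf K1) (sInf K2) with hi | hi
      · left
        refine ⟨hi, ?_⟩
        by_contra hs
        push_neg at hs
        exact hlink3 (fun y hy => ⟨lt_trans hi hy.1, lt_of_lt_of_le hy.2 hs⟩)
      · right
        have hi2 : sInf K2 < sInf K1 := by
          rcases lt_or_eq_of_le hi with h' | h'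
          · exact h'
          · exfalso
            rcases le_or_gt (sSup K1) (sSup K2) with hs | hs
            · exact hlink2 (fun y hy => ⟨lt_of_le_of_lt hi hy.1, lt_of_lt_of_le hy.2 hs⟩)
            · exact hlink3 (fun y hy => ⟨h' ▸ hy.1, lt_trans hy.2 hs⟩)
        refine ⟨hi2, ?_⟩
        by_contra hs
        push_neg at hs
        exact hlink2 (fun y hy => ⟨lt_trans hi2 hy.1, lt_of_lt_of_le hy.2 hs⟩)
    -- in each case construct a Cfg
    have build : ∀ (A B : Set ℝ), IsCantorSet A → IsCantorSet B → (∀ x ∈ A, x ∉ B) →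
        sInf A < sInf B → sSup A < sSup B → sInf B < sSup A →
        ∃ a b c d, Cfg A B a b c d := by
      intro A B hA hB hd hi hs hm'
      have hBA : sInf B ∉ A := fun hmem => hd (sInf B) hmem hB.sInf_mem
      obtain ⟨a, b, hgA, hab1, hab2⟩ := gap_exists hA hBA hi hm'
      have hbB : b ∉ B := fun hmem => hd b hgA.2.2.1 hmem
      have hbs : b < sSup B := lt_of_le_of_lt (le_csSup hA.bddAbove hgA.2.2.1) hs
      obtain ⟨c, d, hgB, hcd1, hcd2⟩ := gap_exists hB hbB hab2 hbs
      refine ⟨a, b, c, d, hgA, hgB, ?_, hcd1, hcd2⟩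
      exact lt_of_lt_of_le hab1 (csInf_le hB.bddBelow hgB.2.1)
    rcases hcases with ⟨hi, hs⟩ | ⟨hi, hs⟩
    · obtain ⟨a, b, c, d, hcfg⟩ := build K1 K2 h1 h2 hdisj hi hs (lt_trans hz3 hz2)
      exact ⟨m K1 K2 a b c d, Or.inl ⟨a, b, c, d, hcfg, rfl⟩⟩
    · obtain ⟨a, b, c, d, hcfg⟩ := build K2 K1 h2 h1 hdisj' hi hs (lt_trans hz1 hz4)
      exact ⟨m K2 K1 a b c d, Or.inr ⟨a, b, c, d, hcfg, rfl⟩⟩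
  -- descent gives smaller measure
  have hstep : ∀ (A B : Set ℝ), IsCantorSet A → IsCantorSet B →
      1 ≤ thickness A * thickness B → (∀ x ∈ A, x ∉ B) →
      (∀ x ∈ A, ∀ y ∈ B, ε ≤ |x - y|) →
      ∀ a b c d, Cfg A B a b c d →
      ∃ a' b' c' d', Cfg B A c' d' a' b' ∧ m B A c' d' a' b' < m A B a b c d := by
    intro A B hA hB hτ' hd hsp a b c d hcfg
    obtain ⟨a', b', c', d', hcfg', hle1, hle2, hstrict⟩ := descent_step hA hB hτ' hd hcfg
    refine ⟨a', b', c', d', hcfg', ?_⟩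
    have hs1 := cfg_sep hsp hcfg
    have hs2 : ε < d' - c' ∧ ε < b' - a' := by
      have := cfg_sep (fun x hx y hy => by rw [abs_sub_comm]; exact hsp y hy x hx) hcfg'
      exact this
    simp only [hm]
    rcases hstrict with hlt | hlt
    · have c1 : gapCount A ε (b' - a') < gapCount A ε (b - a) :=
        gapCount_strict hA hε hcfg'.2.1 hs2.2 (le_refl _) hlt
      have c2 : gapCount B ε (d' - c') ≤ gapCount B ε (d - c) := gapCount_mono hB hε hle2
      omega
    · have c1 : gapCount A ε (b' - a') ≤ gapCount A ε (b - a) := gapCount_mono hA hε hle1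
      have c2 : gapCount B ε (d' - c') < gapCount B ε (d - c) :=
        gapCount_strict hB hε hcfg'.1 hs2.1 (le_refl _) hlt
      omega
  -- well-founded descent
  obtain ⟨n, hn⟩ := hinit
  have hno : ∀ k, ¬ P k := by
    intro k
    induction k using Nat.strong_induction_on with
    | _ k ih =>
      rintro (⟨a, b, c, d, hcfg, hmeq⟩ | ⟨a, b, c, d, hcfg, hmeq⟩)
      · obtain ⟨a', b', c', d', hcfg', hlt⟩ :=
          hstep K1 K2 h1 h2 hτ hdisj hsep a b c d hcfg
        exact ih _ (hmeq ▸ hlt) (Or.inr ⟨c', d', a', b', hcfg', rfl⟩)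
      · obtain ⟨a', b', c', d', hcfg', hlt⟩ :=
          hstep K2 K1 h2 h1 (by linarith [mul_comm (thickness K1) (thickness K2)]) hdisj' hsep'
            a b c d hcfg
        exact ih _ (hmeq ▸ hlt) (Or.inl ⟨c', d', a', b', hcfg', rfl⟩)
  exact hno n hn

end L4

section L5
variable {K : Set ℝ} {p q : ℝ}

noncomputable def affH (p q : ℝ) (hq : q ≠ 0) : ℝ ≃ₜ ℝ :=
  (Homeomorph.mulLeft₀ q hq).trans (Homeomorph.addLeft p)

lemma affH_apply (hq : q ≠ 0) (x : ℝ) : affH p q hq x = p + q * x := rfl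

lemma isCantorSet_image (h : IsCantorSet K) (hq : q ≠ 0) :
    IsCantorSet ((fun x => p + q * x) '' K) := by
  have himg : (fun x => p + q * x) '' K = (affH p q hq) '' K := rfl
  rw [himg]
  set φ := affH p q hq
  refine ⟨h.nonempty.image _, h.compact.image φ.continuous, ⟨?_, ?_⟩, ?_⟩
  · exact (φ.isClosedMap _ h.perfect'.closed)
  · rintro y ⟨x, hx, rfl⟩
    rw [accPt_iff_nhds]
    intro U hU
    have hU' : φ ⁻¹' U ∈ nhds x := φ.continuous.continuousAt.preimage_mem_nhds (by
      simpa using hU)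
    obtain ⟨z, ⟨hz1, hz2⟩, hz3⟩ := h.acc hx hU'
    exact ⟨φ z, ⟨hz1, ⟨z, hz2, rfl⟩⟩, fun hc => hz3 (φ.injective hc)⟩
  · have : (φ.symm) '' (φ '' K) = K := by
      rw [← Set.image_comp]; simp
    exact Topology.IsEmbedding.isTotallyDisconnected φ.symm.isEmbedding (by rw [this]; exact h.2.2.2)

lemma sInf_image_affine_pos (hq : 0 < q) (hne : K.Nonempty) (hbd : BddBelow K) :
    sInf ((fun x => p + q * x) '' K) = p + q * sInf K := by
  refine IsGLB.csInf_eq ⟨?_, ?_⟩ (hne.image _)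
  · rintro y ⟨x, hx, rfl⟩
    show p + q * sInf K ≤ p + q * x
    have := csInf_le hbd hx
    nlinarith
  · intro w hw
    have : (w - p) / q ≤ sInf K := by
      apply le_csInf hne
      intro x hx
      have h' : w ≤ p + q * x := hw ⟨x, hx, rfl⟩
      rw [div_le_iff₀ hq]
      linarith
    rw [div_le_iff₀ hq] at this
    linarith

lemma sSup_image_affine_pos (hq : 0 < q) (hne : K.Nonempty) (hbd : BddAbove K) :
    sSup ((fun x => p + q * x) '' K) = p + q * sSup K := by
  refine IsLUB.csSup_eq ⟨?_, ?_⟩ (hne.image _)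
  · rintro y ⟨x, hx, rfl⟩
    show p + q * x ≤ p + q * sSup K
    have := le_csSup hbd hx
    nlinarith
  · intro w hw
    have : sSup K ≤ (w - p) / q := by
      apply csSup_le hne
      intro x hx
      have h' : p + q * x ≤ w := hw ⟨x, hx, rfl⟩
      rw [le_div_iff₀ hq]
      linarith
    rw [le_div_iff₀ hq] at this
    linarith

lemma sInf_image_neg (hne : K.Nonempty) (hbd : BddAbove K) :
    sInf ((fun x : ℝ => -x) '' K) = -sSup K := by
  refine IsGLB.csInf_eq ⟨?_, ?_⟩ (hne.image _)
  · rintro y ⟨x, hx, rfl⟩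
    show -sSup K ≤ -x
    simp only [neg_le_neg_iff]
    exact le_csSup hbd hx
  · intro w hw
    have : sSup K ≤ -w := csSup_le hne (fun x hx => by
      have h' : w ≤ -x := hw ⟨x, hx, rfl⟩; linarith)
    linarith

lemma sSup_image_neg (hne : K.Nonempty) (hbd : BddBelow K) :
    sSup ((fun x : ℝ => -x) '' K) = -sInf K := by
  refine IsLUB.csSup_eq ⟨?_, ?_⟩ (hne.image _)
  · rintro y ⟨x, hx, rfl⟩
    show -x ≤ -sInf K
    simp only [neg_le_neg_iff]
    exact csInf_le hbd hx
  · intro w hw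
    have : -w ≤ sInf K := le_csInf hne (fun x hx => by
      have h' : -x ≤ w := hw ⟨x, hx, rfl⟩; linarith)
    linarith

end L5

section L6
variable {K : Set ℝ} {p q : ℝ}

lemma isGap_image_pos (hq : 0 < q) {a b : ℝ} (hg : IsGap K a b) :
    IsGap ((fun x => p + q * x) '' K) (p + q * a) (p + q * b) := by
  refine ⟨by beta_reduce; nlinarith [hg.1], ⟨a, hg.2.1, rfl⟩, ⟨b, hg.2.2.1, rfl⟩, ?_⟩
  ext y
  simp only [Set.mem_inter_iff, Set.mem_Ioo, Set.mem_empty_iff_false, iff_false]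
  rintro ⟨⟨h1, h2⟩, x, hx, rfl⟩
  beta_reduce at h1 h2
  exact hg.notMem (by beta_reduce; nlinarith) (by beta_reduce; nlinarith) hx

lemma isGap_image_pos_rev (hq : 0 < q) {a b : ℝ}
    (hg : IsGap ((fun x => p + q * x) '' K) (p + q * a) (p + q * b)) : IsGap K a b := by
  obtain ⟨h1, h2, h3, h4⟩ := hg
  have hab : a < b := by beta_reduce; nlinarith
  have haK : a ∈ K := by
    obtain ⟨x, hx, hxe⟩ := h2
    beta_reduce at hxe
    have : x = a := by beta_reduce; nlinarith [hxe]
    exact this ▸ hx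
  have hbK : b ∈ K := by
    obtain ⟨x, hx, hxe⟩ := h3
    beta_reduce at hxe
    have : x = b := by beta_reduce; nlinarith [hxe]
    exact this ▸ hx
  refine ⟨hab, haK, hbK, ?_⟩
  ext y
  simp only [Set.mem_inter_iff, Set.mem_Ioo, Set.mem_empty_iff_false, iff_false]
  rintro ⟨⟨hy1, hy2⟩, hyK⟩
  have : p + q * y ∈ Set.Ioo (p + q * a) (p + q * b) ∩ ((fun x => p + q * x) '' K) :=
    ⟨⟨by nlinarith, by nlinarith⟩, ⟨y, hyK, rfl⟩⟩
  rw [h4] at this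
  exact this

/-- every gap of the image comes from a gap -/
lemma isGap_image_pos_exists (hq : 0 < q) {u v : ℝ}
    (hg : IsGap ((fun x => p + q * x) '' K) u v) :
    ∃ a b, u = p + q * a ∧ v = p + q * b ∧ IsGap K a b := by
  obtain ⟨a, ha, hae⟩ := hg.2.1
  obtain ⟨b, hb, hbe⟩ := hg.2.2.1
  exact ⟨a, b, hae.symm, hbe.symm, isGap_image_pos_rev hq (hae ▸ hbe ▸ hg)⟩

lemma rightTargets_image_pos (h : IsCantorSet K) (hq : 0 < q) (u ℓ : ℝ) :
    rightTargets ((fun x => p + q * x) '' K) (p + q * u) (q * ℓ) =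
      (fun x => p + q * x) '' rightTargets K u ℓ := by
  ext y
  constructor
  · rintro ⟨hy1, hy2 | hy2⟩
    · obtain ⟨v, hgv, hlen⟩ := hy2
      obtain ⟨a, b, rfl, rfl, hg⟩ := isGap_image_pos_exists hq hgv
      refine ⟨a, ⟨by beta_reduce; nlinarith, Or.inl ⟨b, hg, by beta_reduce; nlinarith⟩⟩, rfl⟩
    · rw [sSup_image_affine_pos hq h.nonempty h.bddAbove] at hy2
      exact ⟨sSup K, ⟨by beta_reduce; nlinarith, Or.inr rfl⟩, hy2.symm⟩
  · rintro ⟨x, ⟨hx1, hx2 | hx2⟩, rfl⟩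
    · obtain ⟨b, hg, hlen⟩ := hx2
      exact ⟨by beta_reduce; nlinarith, Or.inl ⟨p + q * b, isGap_image_pos hq hg, by beta_reduce; nlinarith⟩⟩
    · refine ⟨by beta_reduce; nlinarith, Or.inr ?_⟩
      rw [sSup_image_affine_pos hq h.nonempty h.bddAbove, hx2]

lemma leftTargets_image_pos (h : IsCantorSet K) (hq : 0 < q) (u ℓ : ℝ) :
    leftTargets ((fun x => p + q * x) '' K) (p + q * u) (q * ℓ) =
      (fun x => p + q * x) '' leftTargets K u ℓ := by
  ext y
  constructor
  · rintro ⟨hy1, hy2 | hy2⟩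
    · obtain ⟨v, hgv, hlen⟩ := hy2
      obtain ⟨a, b, rfl, rfl, hg⟩ := isGap_image_pos_exists hq hgv
      refine ⟨b, ⟨by beta_reduce; nlinarith, Or.inl ⟨a, hg, by beta_reduce; nlinarith⟩⟩, rfl⟩
    · rw [sInf_image_affine_pos hq h.nonempty h.bddBelow] at hy2
      exact ⟨sInf K, ⟨by beta_reduce; nlinarith, Or.inr rfl⟩, hy2.symm⟩
  · rintro ⟨x, ⟨hx1, hx2 | hx2⟩, rfl⟩
    · obtain ⟨a, hg, hlen⟩ := hx2
      exact ⟨by beta_reduce; nlinarith, Or.inl ⟨p + q * a, isGap_image_pos hq hg, by beta_reduce; nlinarith⟩⟩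
    · refine ⟨by beta_reduce; nlinarith, Or.inr ?_⟩
      rw [sInf_image_affine_pos hq h.nonempty h.bddBelow, hx2]

lemma thicknessValues_subset_pos (h : IsCantorSet K) (hq : 0 < q) :
    thicknessValues K ⊆ thicknessValues ((fun x => p + q * x) '' K) := by
  rintro r ⟨a, b, hg, hr | hr⟩
  · refine ⟨p + q * a, p + q * b, isGap_image_pos hq hg, Or.inl ?_⟩
    have he : (p + q * b) - (p + q * a) = q * (b - a) := by ring
    rw [he, rightTargets_image_pos h hq b (b - a),
      sInf_image_affine_pos hq ⟨_, rightTargets_mem_sSup h hg _⟩ (rightTargets_bddBelow K b _)]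
    rw [hr]
    have hba : b - a > 0 := by linarith [hg.1]
    field_simp
    ring
  · refine ⟨p + q * a, p + q * b, isGap_image_pos hq hg, Or.inr ?_⟩
    have he : (p + q * b) - (p + q * a) = q * (b - a) := by ring
    rw [he, leftTargets_image_pos h hq a (b - a),
      sSup_image_affine_pos hq ⟨_, leftTargets_mem_sInf h hg _⟩ (leftTargets_bddAbove K a _)]
    rw [hr]
    have hba : b - a > 0 := by linarith [hg.1]
    field_simp
    ring

lemma thickness_image_pos (h : IsCantorSet K) (hq : 0 < q) :
    thickness ((fun x => p + q * x) '' K) = thickness K := by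
  have h2 : IsCantorSet ((fun x => p + q * x) '' K) := isCantorSet_image h (ne_of_gt hq)
  have hinv : (fun x => -p/q + (1/q) * x) '' ((fun x => p + q * x) '' K) = K := by
    rw [← Set.image_comp]
    have hcomp : ((fun x => -p/q + (1/q) * x) ∘ (fun x => p + q * x)) = id := by
      funext x
      simp only [Function.comp_apply, id_eq]
      field_simp
      ring
    rw [hcomp, Set.image_id]
  have hsub1 := thicknessValues_subset_pos h hq (p := p)
  have hsub2 := thicknessValues_subset_pos h2 (q := 1/q) (p := -p/q)
    (by positivity)
  rw [hinv] at hsub2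
  have := Set.Subset.antisymm hsub1 hsub2
  rw [thickness, thickness, this]

end L6

section L7
variable {K : Set ℝ} {p q : ℝ}

lemma isGap_image_neg {a b : ℝ} (hg : IsGap K a b) :
    IsGap ((fun x : ℝ => -x) '' K) (-b) (-a) := by
  refine ⟨by linarith [hg.1], ⟨b, hg.2.2.1, rfl⟩, ⟨a, hg.2.1, rfl⟩, ?_⟩
  ext y
  simp only [Set.mem_inter_iff, Set.mem_Ioo, Set.mem_empty_iff_false, iff_false]
  rintro ⟨⟨h1, h2⟩, x, hx, rfl⟩
  beta_reduce at h1 h2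
  exact hg.notMem (by linarith) (by linarith) hx

lemma isGap_image_neg_exists {u v : ℝ} (hg : IsGap ((fun x : ℝ => -x) '' K) u v) :
    ∃ a b, u = -b ∧ v = -a ∧ IsGap K a b := by
  obtain ⟨h1, ⟨b, hb, hbe⟩, ⟨a, ha, hae⟩, h4⟩ := hg
  beta_reduce at hbe hae
  refine ⟨a, b, hbe.symm, hae.symm, by linarith, ha, hb, ?_⟩
  ext y
  simp only [Set.mem_inter_iff, Set.mem_Ioo, Set.mem_empty_iff_false, iff_false]
  rintro ⟨⟨hy1, hy2⟩, hyK⟩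
  have : -y ∈ Set.Ioo u v ∩ ((fun x : ℝ => -x) '' K) :=
    ⟨⟨by rw [← hbe]; linarith, by rw [← hae]; linarith⟩, ⟨y, hyK, rfl⟩⟩
  rw [h4] at this
  exact this

lemma rightTargets_image_neg (h : IsCantorSet K) (u ℓ : ℝ) :
    rightTargets ((fun x : ℝ => -x) '' K) (-u) ℓ = (fun x : ℝ => -x) '' leftTargets K u ℓ := by
  ext y
  constructor
  · rintro ⟨hy1, hy2 | hy2⟩
    · obtain ⟨v, hgv, hlen⟩ := hy2
      obtain ⟨a, b, rfl, rfl, hg⟩ := isGap_image_neg_exists hgv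
      exact ⟨b, ⟨by linarith, Or.inl ⟨a, hg, by linarith⟩⟩, rfl⟩
    · rw [sSup_image_neg h.nonempty h.bddBelow] at hy2
      exact ⟨sInf K, ⟨by linarith, Or.inr rfl⟩, hy2.symm⟩
  · rintro ⟨x, ⟨hx1, hx2 | hx2⟩, rfl⟩
    · obtain ⟨a, hg, hlen⟩ := hx2
      exact ⟨by beta_reduce; linarith, Or.inl ⟨-a, isGap_image_neg hg, by beta_reduce; linarith⟩⟩
    · refine ⟨by beta_reduce; linarith, Or.inr ?_⟩
      rw [sSup_image_neg h.nonempty h.bddBelow, hx2]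

lemma leftTargets_image_neg (h : IsCantorSet K) (u ℓ : ℝ) :
    leftTargets ((fun x : ℝ => -x) '' K) (-u) ℓ = (fun x : ℝ => -x) '' rightTargets K u ℓ := by
  ext y
  constructor
  · rintro ⟨hy1, hy2 | hy2⟩
    · obtain ⟨v, hgv, hlen⟩ := hy2
      obtain ⟨a, b, rfl, rfl, hg⟩ := isGap_image_neg_exists hgv
      exact ⟨a, ⟨by linarith, Or.inl ⟨b, hg, by linarith⟩⟩, rfl⟩
    · rw [sInf_image_neg h.nonempty h.bddAbove] at hy2
      exact ⟨sSup K, ⟨by linarith, Or.inr rfl⟩, hy2.symm⟩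
  · rintro ⟨x, ⟨hx1, hx2 | hx2⟩, rfl⟩
    · obtain ⟨b, hg, hlen⟩ := hx2
      exact ⟨by beta_reduce; linarith, Or.inl ⟨-b, isGap_image_neg hg, by beta_reduce; linarith⟩⟩
    · refine ⟨by beta_reduce; linarith, Or.inr ?_⟩
      rw [sInf_image_neg h.nonempty h.bddAbove, hx2]

lemma thicknessValues_subset_neg (h : IsCantorSet K) :
    thicknessValues K ⊆ thicknessValues ((fun x : ℝ => -x) '' K) := by
  rintro r ⟨a, b, hg, hr | hr⟩
  · refine ⟨-b, -a, isGap_image_neg hg, Or.inr ?_⟩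
    have he : (-a) - (-b) = b - a := by ring
    rw [he, leftTargets_image_neg h b (b - a),
      sSup_image_neg ⟨_, rightTargets_mem_sSup h hg _⟩ (rightTargets_bddBelow K b _), hr]
    ring
  · refine ⟨-b, -a, isGap_image_neg hg, Or.inl ?_⟩
    have he : (-a) - (-b) = b - a := by ring
    rw [he, rightTargets_image_neg h a (b - a),
      sInf_image_neg ⟨_, leftTargets_mem_sInf h hg _⟩ (leftTargets_bddAbove K a _), hr]
    ring

lemma isCantorSet_image_neg (h : IsCantorSet K) : IsCantorSet ((fun x : ℝ => -x) '' K) := by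
  have he : (fun x : ℝ => -x) = (fun x : ℝ => 0 + (-1) * x) := by funext x; ring
  rw [he]
  exact isCantorSet_image h (by norm_num)

lemma thickness_image_neg (h : IsCantorSet K) :
    thickness ((fun x : ℝ => -x) '' K) = thickness K := by
  have h2 : IsCantorSet ((fun x : ℝ => -x) '' K) := isCantorSet_image_neg h
  have hinv : (fun x : ℝ => -x) '' ((fun x : ℝ => -x) '' K) = K := by
    rw [← Set.image_comp]
    have hcomp : ((fun x : ℝ => -x) ∘ (fun x : ℝ => -x)) = id := by
      funext x; simp
    rw [hcomp, Set.image_id]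
  have hsub1 := thicknessValues_subset_neg h
  have hsub2 := thicknessValues_subset_neg h2
  rw [hinv] at hsub2
  rw [thickness, thickness, Set.Subset.antisymm hsub1 hsub2]

lemma thickness_image_affine (h : IsCantorSet K) (hq : q ≠ 0) :
    thickness ((fun x => p + q * x) '' K) = thickness K := by
  rcases lt_or_gt_of_ne hq with hneg | hpos
  · have he : (fun x => p + q * x) '' K =
        (fun x => p + (-q) * x) '' ((fun x : ℝ => -x) '' K) := by
      have hcomp : (fun x : ℝ => p + q * x) = ((fun x => p + (-q) * x) ∘ (fun x : ℝ => -x)) := by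
        funext x
        simp only [Function.comp_apply]
        ring
      rw [hcomp, Set.image_comp]
    rw [he, thickness_image_pos (isCantorSet_image_neg h) (by linarith),
      thickness_image_neg h]
  · exact thickness_image_pos h hpos

lemma isCantorSet_image_affine (h : IsCantorSet K) (hq : q ≠ 0) :
    IsCantorSet ((fun x => p + q * x) '' K) := isCantorSet_image h hq

end L7

section L8
variable {K : Set ℝ} {p q : ℝ}

lemma sInf_image_affine_neg (hq : q < 0) (hne : K.Nonempty) (hbd : BddAbove K) :
    sInf ((fun x => p + q * x) '' K) = p + q * sSup K := by
  have hcomp : (fun x : ℝ => p + q * x) = ((fun x => p + (-q) * x) ∘ (fun x : ℝ => -x)) := by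
    funext x; simp only [Function.comp_apply]; ring
  rw [hcomp, Set.image_comp, sInf_image_affine_pos (by linarith) (hne.image _)
    (by
      obtain ⟨c, hc⟩ := hbd
      exact ⟨-c, by rintro y ⟨x, hx, rfl⟩; have := hc hx; simp; linarith⟩),
    sInf_image_neg hne hbd]
  ring

lemma sSup_image_affine_neg (hq : q < 0) (hne : K.Nonempty) (hbd : BddBelow K) :
    sSup ((fun x => p + q * x) '' K) = p + q * sInf K := by
  have hcomp : (fun x : ℝ => p + q * x) = ((fun x => p + (-q) * x) ∘ (fun x : ℝ => -x)) := by
    funext x; simp only [Function.comp_apply]; ring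
  rw [hcomp, Set.image_comp, sSup_image_affine_pos (by linarith) (hne.image _)
    (by
      obtain ⟨c, hc⟩ := hbd
      exact ⟨-c, by rintro y ⟨x, hx, rfl⟩; have := hc hx; simp; linarith⟩),
    sSup_image_neg hne hbd]
  ring

end L8


/-- pinned dot product sets contain long intervals. -/

theorem pinned_dot_interval (K1 K2 : Set ℝ) (h1 : IsCantorSet K1) (h2 : IsCantorSet K2)
    (hτ : 1 ≤ thickness K1 * thickness K2) (ℓ : ℝ)
    (hl1 : sSup K1 - sInf K1 = ℓ) (hl2 : sSup K2 - sInf K2 = ℓ)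
    (x₁ x₂ : ℝ) (hx₁ : x₁ ≠ 0) (hx₂ : x₂ ≠ 0) :
    ∃ a b : ℝ, ℓ * min |x₁| |x₂| ≤ b - a ∧
      Set.Ioo a b ⊆ {t : ℝ | ∃ y₁ ∈ K1, ∃ y₂ ∈ K2, x₁ * y₁ + x₂ * y₂ = t} := by
  have hℓ : 0 < ℓ := by
    rw [← hl2]; linarith [h2.sInf_lt_sSup]
  set A : ℝ → Set ℝ := fun t => (fun y => t + (-x₁) * y) '' K1 with hA
  set B : Set ℝ := (fun y => (0:ℝ) + x₂ * y) '' K2 with hB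
  have hAc : ∀ t, IsCantorSet (A t) := fun t => isCantorSet_image_affine h1 (neg_ne_zero.2 hx₁)
  have hBc : IsCantorSet B := isCantorSet_image_affine h2 hx₂
  have hAτ : ∀ t, thickness (A t) = thickness K1 :=
    fun t => thickness_image_affine h1 (neg_ne_zero.2 hx₁)
  have hBτ : thickness B = thickness K2 := thickness_image_affine h2 hx₂
  -- hull endpoints of A t
  obtain ⟨c₁, c₂, hc⟩ : ∃ c₁ c₂, (∀ t, sInf (A t) = t + c₁ ∧ sSup (A t) = t + c₂) ∧
      c₂ - c₁ = |x₁| * ℓ := by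
    rcases lt_or_gt_of_ne hx₁ with hneg | hpos
    · -- -x₁ > 0
      refine ⟨(-x₁) * sInf K1, (-x₁) * sSup K1, fun t =>
        ⟨sInf_image_affine_pos (by linarith) h1.nonempty h1.bddBelow,
         sSup_image_affine_pos (by linarith) h1.nonempty h1.bddAbove⟩, ?_⟩
      rw [abs_of_neg hneg, ← hl1]; ring
    · -- -x₁ < 0
      refine ⟨(-x₁) * sSup K1, (-x₁) * sInf K1, fun t =>
        ⟨sInf_image_affine_neg (by linarith) h1.nonempty h1.bddAbove,
         sSup_image_affine_neg (by linarith) h1.nonempty h1.bddBelow⟩, ?_⟩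
      rw [abs_of_pos hpos, ← hl1]; ring
  obtain ⟨hc, hcl⟩ := hc
  obtain ⟨d₁, d₂, hd1, hd2, hdl⟩ : ∃ d₁ d₂, sInf B = d₁ ∧ sSup B = d₂ ∧ d₂ - d₁ = |x₂| * ℓ := by
    rcases lt_or_gt_of_ne hx₂ with hneg | hpos
    · refine ⟨0 + x₂ * sSup K2, 0 + x₂ * sInf K2,
        sInf_image_affine_neg hneg h2.nonempty h2.bddAbove,
        sSup_image_affine_neg hneg h2.nonempty h2.bddBelow, ?_⟩
      rw [abs_of_neg hneg, ← hl2]; ring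
    · refine ⟨0 + x₂ * sInf K2, 0 + x₂ * sSup K2,
        sInf_image_affine_pos hpos h2.nonempty h2.bddBelow,
        sSup_image_affine_pos hpos h2.nonempty h2.bddAbove, ?_⟩
      rw [abs_of_pos hpos, ← hl2]; ring
  set L1 := |x₁| * ℓ with hL1
  set L2 := |x₂| * ℓ with hL2
  have hL1pos : 0 < L1 := mul_pos (abs_pos.2 hx₁) hℓ
  have hL2pos : 0 < L2 := mul_pos (abs_pos.2 hx₂) hℓ
  refine ⟨max d₁ (d₂ - L1) - c₁, d₂ - c₁, ?_, ?_⟩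
  · have : d₂ - c₁ - (max d₁ (d₂ - L1) - c₁) = min (d₂ - d₁) L1 := by
      rcases le_total d₁ (d₂ - L1) with hcase | hcase
      · rw [max_eq_right hcase, min_eq_right (by linarith)]; ring
      · rw [max_eq_left hcase, min_eq_left (by linarith)]; ring
    rw [this, hdl]
    rcases le_total |x₁| |x₂| with hm | hm
    · rw [min_eq_left hm, min_eq_right (show L1 ≤ L2 by rw [hL1, hL2]; nlinarith), hL1]
      linarith [mul_comm ℓ |x₁|]
    · rw [min_eq_right hm, min_eq_left (show L2 ≤ L1 by rw [hL1, hL2]; nlinarith), hL2]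
      linarith [mul_comm ℓ |x₂|]
  · rintro t ⟨ht1, ht2⟩
    -- the hull of A t
    obtain ⟨hAinf, hAsup⟩ := hc t
    have hp1 : d₁ < t + c₁ := lt_of_le_of_lt (le_max_left _ _) (by linarith)
    have hp2 : t + c₁ < d₂ := by linarith
    have hp3 : d₂ < t + c₂ := by
      have := le_max_right d₁ (d₂ - L1)
      have hcc : c₂ - c₁ = L1 := hcl
      linarith
    have hlink : Linked (A t) B := by
      rw [Linked, hAinf, hAsup, hd1, hd2]
      refine ⟨⟨(t + c₁ + d₂) / 2, ⟨by linarith, by linarith⟩, ⟨by linarith, by linarith⟩⟩, ?_, ?_⟩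
      · intro hsub
        have : (d₂ + (t + c₂)) / 2 ∈ Set.Ioo d₁ d₂ :=
          hsub ⟨by linarith, by linarith⟩
        simp only [Set.mem_Ioo] at this
        linarith [this.2]
      · intro hsub
        have : (d₁ + (t + c₁)) / 2 ∈ Set.Ioo (t + c₁) (t + c₂) :=
          hsub ⟨by linarith, by linarith⟩
        simp only [Set.mem_Ioo] at this
        linarith [this.1]
    have hτ' : 1 ≤ thickness (A t) * thickness B := by
      rw [hAτ t, hBτ]; exact hτ
    obtain ⟨z, ⟨y₁, hy₁, hz1⟩, ⟨y₂, hy₂, hz2⟩⟩ := gap_lemma (hAc t) hBc hτ' hlink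
    beta_reduce at hz1 hz2
    exact ⟨y₁, hy₁, y₂, hy₂, by linarith⟩
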